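/- Combined one-step bound: let Φ ⊆ R^n be nonempty closed convex, L : R^n → R differentiable and L₀-smooth, φ* ∈ Φ, τ, G > 0, φ ∈ Φ, and φ⁺ = Proj_Φ(φ − τ·Clip(∇L(φ))). With F(φ) = min(1, G/‖∇L(φ)‖) (=1 if ∇L(φ)=0), one has ‖φ⁺ − φ*‖² ≤ (1 + τ·F(φ)·L₀)‖φ − φ*‖² + τ·(2F(φ)·(L(φ*) − L(φ)) + τG²). -/

import Mathlib

open RealInnerProductSpace

noncomputable def Clip {n : ℕ} (G : ℝ) (v : EuclideanSpace ℝ (Fin n)) :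
    EuclideanSpace ℝ (Fin n) :=
  if ‖v‖ ≤ G then v else (G / ‖v‖) • v

open Classical in
noncomputable def clipFactor {n : ℕ} (G : ℝ) (v : EuclideanSpace ℝ (Fin n)) : ℝ :=
  if v = 0 then 1 else min 1 (G / ‖v‖)

section Aux

variable {n : ℕ}

/-- Descent lemma (lower form) from Lipschitz gradient. -/
lemma descent_aux (L : EuclideanSpace ℝ (Fin n) → ℝ) (L₀ : ℝ) (hL₀ : 0 ≤ L₀)
    (hdiff : Differentiable ℝ L)
    (hsmooth : ∀ x y, ‖gradient L x - gradient L y‖ ≤ L₀ * ‖x - y‖)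
    (x y : EuclideanSpace ℝ (Fin n)) :
    L x + ⟪gradient L x, y - x⟫ - L₀ / 2 * ‖y - x‖ ^ 2 ≤ L y := by
  set v := y - x with hv
  set g₀ := gradient L x with hg₀
  set φ : ℝ → ℝ := fun t => L (x + t • v) - t * ⟪g₀, v⟫ + L₀ / 2 * ‖v‖ ^ 2 * t ^ 2 with hφ
  have hder : ∀ t : ℝ, HasDerivAt φ
      (⟪gradient L (x + t • v), v⟫ - ⟪g₀, v⟫ + L₀ * ‖v‖ ^ 2 * t) t := by
    intro t
    have hc : HasDerivAt (fun t : ℝ => x + t • v) v t := by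
      simpa using ((hasDerivAt_id t).smul_const v).const_add x
    have hL : HasDerivAt (fun t : ℝ => L (x + t • v)) ⟪gradient L (x + t • v), v⟫ t := by
      have := ((hdiff (x + t • v)).hasGradientAt.hasFDerivAt).comp_hasDerivAt t hc
      exact this.congr_deriv (by simp [InnerProductSpace.toDual_apply_apply])
    have h2 : HasDerivAt (fun t : ℝ => t * ⟪g₀, v⟫) ⟪g₀, v⟫ t := by
      simpa using (hasDerivAt_id t).mul_const ⟪g₀, v⟫
    have h3 : HasDerivAt (fun t : ℝ => L₀ / 2 * ‖v‖ ^ 2 * t ^ 2) (L₀ * ‖v‖ ^ 2 * t) t := by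
      have := (hasDerivAt_pow 2 t).const_mul (L₀ / 2 * ‖v‖ ^ 2)
      refine this.congr_deriv ?_
      norm_num
      ring
    exact (hL.sub h2).add h3
  have hmono : MonotoneOn φ (Set.Icc (0 : ℝ) 1) := by
    apply monotoneOn_of_deriv_nonneg (convex_Icc 0 1)
    · exact fun t _ => ((hder t).continuousAt).continuousWithinAt
    · exact fun t _ => ((hder t).differentiableAt).differentiableWithinAt
    · intro t ht
      rw [interior_Icc] at ht
      rw [(hder t).deriv]
      have hb : ⟪g₀ - gradient L (x + t • v), v⟫ ≤ L₀ * ‖v‖ ^ 2 * t := by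
        calc ⟪g₀ - gradient L (x + t • v), v⟫ ≤ ‖g₀ - gradient L (x + t • v)‖ * ‖v‖ :=
              real_inner_le_norm _ _
          _ ≤ (L₀ * ‖x - (x + t • v)‖) * ‖v‖ := by
              have := hsmooth x (x + t • v)
              exact mul_le_mul_of_nonneg_right this (norm_nonneg v)
          _ = L₀ * ‖v‖ ^ 2 * t := by
              have hx : x - (x + t • v) = -(t • v) := by abel
              rw [hx, norm_neg, norm_smul, Real.norm_eq_abs, abs_of_pos ht.1]
              ring
      have hb' : ⟪g₀, v⟫ - ⟪gradient L (x + t • v), v⟫ ≤ L₀ * ‖v‖ ^ 2 * t := by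
        rwa [inner_sub_left] at hb
      linarith
  have h01 := hmono (Set.mem_Icc.mpr ⟨le_refl 0, zero_le_one⟩)
    (Set.mem_Icc.mpr ⟨zero_le_one, le_refl 1⟩) zero_le_one
  have h0 : φ 0 = L x := by simp [hφ]
  have h1 : φ 1 = L y - ⟪g₀, v⟫ + L₀ / 2 * ‖v‖ ^ 2 := by
    simp [hφ, hv]
  rw [h0, h1] at h01
  linarith

/-- The metric projection onto a convex set does not increase the distance to points of the set. -/
lemma proj_contract_sq (Φ : Set (EuclideanSpace ℝ (Fin n))) (hΦcv : Convex ℝ Φ)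
    (proj : EuclideanSpace ℝ (Fin n) → EuclideanSpace ℝ (Fin n))
    (hproj : ∀ x, proj x ∈ Φ ∧ ∀ y ∈ Φ, dist x (proj x) ≤ dist x y)
    (x z : EuclideanSpace ℝ (Fin n)) (hz : z ∈ Φ) :
    ‖proj x - z‖ ^ 2 ≤ ‖x - z‖ ^ 2 := by
  have hmem := (hproj x).1
  have hinf : ‖x - proj x‖ = ⨅ w : Φ, ‖x - (w : EuclideanSpace ℝ (Fin n))‖ := by
    apply le_antisymm
    · haveI : Nonempty ↑Φ := ⟨⟨proj x, hmem⟩⟩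
      apply le_ciInf
      intro w
      simpa [dist_eq_norm] using (hproj x).2 w w.2
    · exact ciInf_le ⟨0, by rintro a ⟨w, rfl⟩; exact norm_nonneg _⟩ (⟨proj x, hmem⟩ : Φ)
  have hvar := (norm_eq_iInf_iff_real_inner_le_zero hΦcv hmem).mp hinf z hz
  have hexp : ‖x - z‖ ^ 2
      = ‖x - proj x‖ ^ 2 + 2 * ⟪x - proj x, proj x - z⟫ + ‖proj x - z‖ ^ 2 := by
    have := norm_add_sq_real (x - proj x) (proj x - z)
    rw [sub_add_sub_cancel] at this
    exact this
  have hneg : ⟪x - proj x, proj x - z⟫ = -⟪x - proj x, z - proj x⟫ := by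
    rw [show proj x - z = -(z - proj x) by abel, inner_neg_right]
  nlinarith [sq_nonneg ‖x - proj x‖]

end Aux

set_option maxHeartbeats 1000000 in
/-- Combined one-step bound for clipped projected gradient descent. -/
theorem clipped_pgd_combined_bound {n : ℕ} (Φ : Set (EuclideanSpace ℝ (Fin n)))
    (hΦne : Φ.Nonempty) (hΦcl : IsClosed Φ) (hΦcv : Convex ℝ Φ)
    (L : EuclideanSpace ℝ (Fin n) → ℝ) (L₀ : ℝ) (hL₀ : 0 ≤ L₀)
    (hdiff : Differentiable ℝ L)
    (hsmooth : ∀ x y, ‖gradient L x - gradient L y‖ ≤ L₀ * ‖x - y‖)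
    (proj : EuclideanSpace ℝ (Fin n) → EuclideanSpace ℝ (Fin n))
    (hproj : ∀ x, proj x ∈ Φ ∧ ∀ y ∈ Φ, dist x (proj x) ≤ dist x y)
    (φStar : EuclideanSpace ℝ (Fin n)) (hφStar : φStar ∈ Φ)
    (τ G : ℝ) (hτ : 0 < τ) (hG : 0 < G)
    (φ : EuclideanSpace ℝ (Fin n)) (hφ : φ ∈ Φ)
    (φPlus : EuclideanSpace ℝ (Fin n))
    (hupd : φPlus = proj (φ - τ • Clip G (gradient L φ))) :
    ‖φPlus - φStar‖ ^ 2 ≤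
      (1 + τ * clipFactor G (gradient L φ) * L₀) * ‖φ - φStar‖ ^ 2
      + τ * (2 * clipFactor G (gradient L φ) * (L φStar - L φ) + τ * G ^ 2) := by
  classical
  set g := gradient L φ with hg
  set c := clipFactor G g with hc
  have hc0 : 0 ≤ c := by
    rw [hc, clipFactor]
    split_ifs with h
    · norm_num
    · exact le_min zero_le_one (div_nonneg hG.le (norm_nonneg g))
  have hc1 : c ≤ 1 := by
    rw [hc, clipFactor]
    split_ifs with h
    · exact le_refl 1
    · exact min_le_left _ _
  have hcg : c * ‖g‖ ≤ G := by
    rw [hc, clipFactor]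
    split_ifs with h
    · simp [h, hG.le]
    · have hgpos : 0 < ‖g‖ := norm_pos_iff.mpr h
      calc min 1 (G / ‖g‖) * ‖g‖ ≤ (G / ‖g‖) * ‖g‖ :=
            mul_le_mul_of_nonneg_right (min_le_right _ _) (norm_nonneg g)
        _ = G := div_mul_cancel₀ G hgpos.ne'
  have hclip : Clip G g = c • g := by
    rw [Clip, hc, clipFactor]
    split_ifs with h1 h2 h2
    · simp [h1]
    · -- ‖g‖ ≤ G, g ≠ 0 ⇒ min 1 (G/‖g‖) = 1
      have hgpos : 0 < ‖g‖ := norm_pos_iff.mpr h2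
      have : (1 : ℝ) ≤ G / ‖g‖ := (one_le_div hgpos).mpr h1
      rw [min_eq_left this, one_smul]
    · exact absurd (by simp [h2, hG.le] : ‖g‖ ≤ G) h1
    · have hgpos : 0 < ‖g‖ := norm_pos_iff.mpr h2
      have : G / ‖g‖ ≤ 1 := by
        rw [div_le_one hgpos]
        exact (not_le.mp h1).le
      rw [min_eq_right this]
  set u := φ - (τ * c) • g with hu
  have hupd' : φPlus = proj u := by
    rw [hupd, hclip, hu, smul_smul]
  have step1 : ‖φPlus - φStar‖ ^ 2 ≤ ‖u - φStar‖ ^ 2 := by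
    rw [hupd']
    exact proj_contract_sq Φ hΦcv proj hproj u φStar hφStar
  have step2 : ‖u - φStar‖ ^ 2
      = ‖φ - φStar‖ ^ 2 - 2 * (τ * c) * ⟪g, φ - φStar⟫ + (τ * c) ^ 2 * ‖g‖ ^ 2 := by
    have h1 : u - φStar = (φ - φStar) - (τ * c) • g := by rw [hu]; abel
    rw [h1, norm_sub_sq_real, real_inner_smul_right, real_inner_comm, norm_smul,
      Real.norm_eq_abs, abs_of_nonneg (mul_nonneg hτ.le hc0)]
    ring
  have step3 := descent_aux L L₀ hL₀ hdiff hsmooth φ φStar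
  have step3' : -⟪g, φ - φStar⟫ ≤ L φStar - L φ + L₀ / 2 * ‖φ - φStar‖ ^ 2 := by
    have h1 : ⟪g, φStar - φ⟫ = -⟪g, φ - φStar⟫ := by
      rw [show φStar - φ = -(φ - φStar) by abel, inner_neg_right]
    have h2 : ‖φStar - φ‖ = ‖φ - φStar‖ := norm_sub_rev _ _
    rw [← hg] at step3
    rw [h1, h2] at step3
    linarith
  have step4 : (τ * c) ^ 2 * ‖g‖ ^ 2 ≤ τ ^ 2 * G ^ 2 := by
    have h1 : (τ * c) ^ 2 * ‖g‖ ^ 2 = τ ^ 2 * (c * ‖g‖) ^ 2 := by ring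
    rw [h1]
    have h2 : (c * ‖g‖) ^ 2 ≤ G ^ 2 := by
      apply sq_le_sq'
      · nlinarith [mul_nonneg hc0 (norm_nonneg g)]
      · exact hcg
    nlinarith [sq_nonneg τ]
  have hmul : 2 * (τ * c) * (-⟪g, φ - φStar⟫)
      ≤ 2 * (τ * c) * (L φStar - L φ + L₀ / 2 * ‖φ - φStar‖ ^ 2) :=
    mul_le_mul_of_nonneg_left step3' (by positivity)
  calc ‖φPlus - φStar‖ ^ 2
      ≤ ‖φ - φStar‖ ^ 2 - 2 * (τ * c) * ⟪g, φ - φStar⟫ + (τ * c) ^ 2 * ‖g‖ ^ 2 := by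
        rw [← step2]; exact step1
    _ ≤ (1 + τ * c * L₀) * ‖φ - φStar‖ ^ 2 + τ * (2 * c * (L φStar - L φ) + τ * G ^ 2) := by
        nlinarith [hmul, step4]
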